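/- Let ω and ν be radial weights such that P_ω : L^∞_ν̂ → B^∞_ν̂ is bounded. Then there exists a constant C = C(ω,ν) > 0 such that (ω/ν̂)_x ≤ C · ω_{2x} / ν̂(1 − 1/x) for all x ≥ 1. -/

import Mathlib

open MeasureTheory Set Complex
open scoped ENNReal

noncomputable section

/-- The open unit disc in the complex plane. -/
def unitDisc : Set ℂ := Metric.ball 0 1

/-- Tail integral `ω̂(r) = ∫_r^1 ω(s) ds`. -/
def tl (ω : ℝ → ℝ) (r : ℝ) : ℝ := ∫ s in r..1, ω s

/-- Moment `ω_x = ∫_0^1 s^x ω(s) ds` (real power in the exponent). -/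
def mom (ω : ℝ → ℝ) (x : ℝ) : ℝ := ∫ s in (0:ℝ)..1, s ^ x * ω s

/-- `ω` is a radial weight: nonnegative and integrable on `[0,1)`, with positive
tail integrals. -/
def IsRadialWeight (ω : ℝ → ℝ) : Prop :=
  (∀ s ∈ Ico (0:ℝ) 1, 0 ≤ ω s) ∧ IntegrableOn ω (Ico (0:ℝ) 1) ∧
    ∀ r ∈ Ico (0:ℝ) 1, 0 < tl ω r

/-- The upper doubling class `D̂`: `sup_{0≤r<1} ω̂(r)/ω̂((1+r)/2) < ∞`. -/
def Dhat (ω : ℝ → ℝ) : Prop :=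
  ∃ C : ℝ, ∀ r ∈ Ico (0:ℝ) 1, tl ω r ≤ C * tl ω ((1 + r) / 2)

/-- The class `Ď`: there are `K > 1`, `C > 1` with `ω̂(r) ≥ C ω̂(1 - (1-r)/K)`. -/
def Dcheck (ω : ℝ → ℝ) : Prop :=
  ∃ K C : ℝ, 1 < K ∧ 1 < C ∧ ∀ r ∈ Ico (0:ℝ) 1, C * tl ω (1 - (1 - r) / K) ≤ tl ω r

/-- The class `D = D̂ ∩ Ď`. -/
def DD (ω : ℝ → ℝ) : Prop := Dhat ω ∧ Dcheck ω

/-- The Bergman reproducing kernel `B^ω_z(ζ) = Σ_n (conj z · ζ)^n / (2 ω_{2n+1})`. -/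
def bKer (ω : ℝ → ℝ) (z ζ : ℂ) : ℂ :=
  ∑' n : ℕ, (starRingEnd ℂ z * ζ) ^ n / ((2 * mom ω (2 * (n : ℝ) + 1) : ℝ) : ℂ)

/-- The integrand of the Bergman projection. -/
def bInt (ω : ℝ → ℝ) (f : ℂ → ℂ) (z ζ : ℂ) : ℂ :=
  f ζ * starRingEnd ℂ (bKer ω z ζ) * ((ω ‖ζ‖ : ℝ) : ℂ)

/-- The Bergman projection `P_ω f(z) = ∫_𝔻 f(ζ) conj(B^ω_z(ζ)) ω(ζ) dA(ζ)`,
where `dA` is normalized area measure `dx dy / π`. -/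
def bProj (ω : ℝ → ℝ) (f : ℂ → ℂ) (z : ℂ) : ℂ :=
  (Real.pi : ℂ)⁻¹ * ∫ ζ in unitDisc, bInt ω f z ζ

/-- The weighted sup-norm `ess sup_{z ∈ 𝔻} |f(z)| v(|z|)`, valued in `ℝ≥0∞`. -/
def wSup (v : ℝ → ℝ) (f : ℂ → ℂ) : ℝ≥0∞ :=
  essSup (fun z => ENNReal.ofReal (‖f z‖ * v ‖z‖)) (volume.restrict unitDisc)

/-- `P_ω : L^∞_v → H^∞_v` is bounded: there is `C > 0` so that for every
`f ∈ L^∞_v` the defining integral converges absolutely at every point of `𝔻`,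
`P_ω f` is analytic on `𝔻`, and `‖P_ω f‖_{L^∞_v} ≤ C ‖f‖_{L^∞_v}`. -/
def ProjBddH (ω v : ℝ → ℝ) : Prop :=
  ∃ C : ℝ, 0 < C ∧ ∀ f : ℂ → ℂ,
    AEStronglyMeasurable f (volume.restrict unitDisc) → wSup v f < ⊤ →
    (∀ z ∈ unitDisc, IntegrableOn (bInt ω f z) unitDisc) ∧
    DifferentiableOn ℂ (bProj ω f) unitDisc ∧
    wSup v (bProj ω f) ≤ ENNReal.ofReal C * wSup v f

/-- `P_ω : L^∞_v → B^∞_v` is bounded: there is `C > 0` so that for every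
`f ∈ L^∞_v` the defining integral converges absolutely at every point of `𝔻`,
`P_ω f` is analytic on `𝔻`, and `‖P_ω f‖_{B^∞_v} ≤ C ‖f‖_{L^∞_v}`. -/
def ProjBddB (ω v : ℝ → ℝ) : Prop :=
  ∃ C : ℝ, 0 < C ∧ ∀ f : ℂ → ℂ,
    AEStronglyMeasurable f (volume.restrict unitDisc) → wSup v f < ⊤ →
    (∀ z ∈ unitDisc, IntegrableOn (bInt ω f z) unitDisc) ∧
    DifferentiableOn ℂ (bProj ω f) unitDisc ∧
    ∀ z ∈ unitDisc,
      ENNReal.ofReal ((1 - ‖z‖) * v ‖z‖ * ‖deriv (bProj ω f) z‖) ≤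
        ENNReal.ofReal C * wSup v f

/-- The moment condition `sup_{x ≥ 0} (ν_x / ω_{2x}) (ω/ν̂)_x < ∞`. -/
def MomCond (ω ν : ℝ → ℝ) : Prop :=
  ∃ C : ℝ, ∀ x : ℝ, 0 ≤ x →
    mom ν x / mom ω (2 * x) * mom (fun s => ω s / tl ν s) x ≤ C

/-- The tail condition `sup_{0 ≤ r < 1} (ν̂(r)/ω̂(r)) ∫_r^1 ω(s)/ν̂(s) ds < ∞`. -/
def TailCond (ω ν : ℝ → ℝ) : Prop :=
  ∃ C : ℝ, ∀ r ∈ Ico (0:ℝ) 1, tl ν r / tl ω r * tl (fun s => ω s / tl ν s) r ≤ C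

namespace Aux

open Real

variable {ω ν : ℝ → ℝ}

lemma ae_ne_one : ∀ᵐ s : ℝ ∂volume, s ≠ 1 := by
  have h : volume ({(1:ℝ)} : Set ℝ) = 0 := measure_singleton 1
  rw [ae_iff]
  convert h using 2
  ext s; simp

lemma ae_ne_zero : ∀ᵐ s : ℝ ∂volume, s ≠ 0 := by
  have h : volume ({(0:ℝ)} : Set ℝ) = 0 := measure_singleton 0
  rw [ae_iff]
  convert h using 2
  ext s; simp

lemma ae_nonneg_restrict (hω : IsRadialWeight ω) {S : Set ℝ} (hSm : MeasurableSet S)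
    (hS : S ⊆ Icc 0 1) : 0 ≤ᵐ[volume.restrict S] ω := by
  filter_upwards [ae_restrict_mem hSm, ae_restrict_of_ae ae_ne_one] with s hs h1
  exact hω.1 s ⟨(hS hs).1, lt_of_le_of_ne (hS hs).2 h1⟩

lemma intervalIntegrable_weight (hω : IsRadialWeight ω) {a b : ℝ} (ha : 0 ≤ a) (hb : b ≤ 1)
    (hab : a ≤ b) : IntervalIntegrable ω volume a b := by
  rw [intervalIntegrable_iff_integrableOn_Ioo_of_le hab]
  exact hω.2.1.mono_set (fun s hs => ⟨le_trans ha hs.1.le, lt_of_lt_of_le hs.2 hb⟩)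

lemma tl_nonneg (hω : IsRadialWeight ω) {r : ℝ} (h0 : 0 ≤ r) (h1 : r ≤ 1) : 0 ≤ tl ω r := by
  apply intervalIntegral.integral_nonneg_of_ae_restrict h1
  exact ae_nonneg_restrict hω measurableSet_Icc (Icc_subset_Icc h0 le_rfl)

lemma tl_antitone (hω : IsRadialWeight ω) {a b : ℝ} (ha : 0 ≤ a) (hab : a ≤ b) (hb : b ≤ 1) :
    tl ω b ≤ tl ω a := by
  have h1 : IntervalIntegrable ω volume a b := intervalIntegrable_weight hω ha hb hab
  have h2 : IntervalIntegrable ω volume b 1 := intervalIntegrable_weight hω (ha.trans hab) le_rfl hb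
  have key : (∫ s in a..b, ω s) + tl ω b = tl ω a :=
    intervalIntegral.integral_add_adjacent_intervals h1 h2
  have hnn : 0 ≤ ∫ s in a..b, ω s := by
    apply intervalIntegral.integral_nonneg_of_ae_restrict hab
    exact ae_nonneg_restrict hω measurableSet_Icc (Icc_subset_Icc ha hb)
  linarith

lemma tl_continuousOn (hω : IsRadialWeight ω) : ContinuousOn (tl ω) (Icc 0 1) := by
  have hint : IntegrableOn ω (Icc (0:ℝ) 1) volume :=
    hω.2.1.congr_set_ae (Ico_ae_eq_Icc (μ := volume) (a := (0:ℝ)) (b := 1)).symm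
  have hprim := intervalIntegral.continuousOn_primitive hint
  apply ContinuousOn.congr (f := fun r => tl ω 0 - ∫ t in Ioc 0 r, ω t)
  · exact continuousOn_const.sub hprim
  · intro r hr
    have h1 : IntervalIntegrable ω volume 0 r := intervalIntegrable_weight hω le_rfl hr.2 hr.1
    have h2 : IntervalIntegrable ω volume r 1 := intervalIntegrable_weight hω hr.1 le_rfl hr.2
    have key : (∫ s in (0:ℝ)..r, ω s) + tl ω r = tl ω 0 :=
      intervalIntegral.integral_add_adjacent_intervals h1 h2
    have : (∫ s in (0:ℝ)..r, ω s) = ∫ t in Ioc 0 r, ω t := intervalIntegral.integral_of_le hr.1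
    simp only [tl] at key ⊢
    linarith [key, this.symm.le]

lemma intervalIntegrable_pow_weight (hω : IsRadialWeight ω) {y a b : ℝ} (hy : 0 ≤ y)
    (ha : 0 ≤ a) (hb : b ≤ 1) (hab : a ≤ b) :
    IntervalIntegrable (fun s => s ^ y * ω s) volume a b := by
  rw [intervalIntegrable_iff_integrableOn_Ioo_of_le hab]
  have hsub : Ioo a b ⊆ Ico 0 1 := fun s hs => ⟨le_trans ha hs.1.le, lt_of_lt_of_le hs.2 hb⟩
  apply Integrable.mono (hω.2.1.mono_set hsub)
  · exact ((measurable_id.pow_const y).aestronglyMeasurable).mul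
      ((hω.2.1.mono_set hsub).aestronglyMeasurable)
  · filter_upwards [ae_restrict_mem measurableSet_Ioo] with s hs
    have h0s : (0:ℝ) ≤ s := le_trans ha hs.1.le
    have h1s : s ≤ 1 := le_of_lt (lt_of_lt_of_le hs.2 hb)
    rw [Real.norm_eq_abs, Real.norm_eq_abs, abs_mul]
    have : |s ^ y| ≤ 1 := by
      rw [_root_.abs_of_nonneg (Real.rpow_nonneg h0s y)]
      exact Real.rpow_le_one h0s h1s hy
    nlinarith [abs_nonneg (ω s), abs_nonneg (s ^ y)]

lemma mom_nonneg (hω : IsRadialWeight ω) {y : ℝ} (_hy : 0 ≤ y) : 0 ≤ mom ω y := by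
  apply intervalIntegral.integral_nonneg_of_ae_restrict zero_le_one
  filter_upwards [ae_nonneg_restrict hω measurableSet_Icc (subset_rfl),
    ae_restrict_mem measurableSet_Icc] with s hs hmem
  exact mul_nonneg (Real.rpow_nonneg hmem.1 y) hs

lemma mom_ge (hω : IsRadialWeight ω) {ρ y : ℝ} (h0 : 0 ≤ ρ) (h1 : ρ ≤ 1) (hy : 0 ≤ y) :
    ρ ^ y * tl ω ρ ≤ mom ω y := by
  have ha : IntervalIntegrable (fun s => s ^ y * ω s) volume 0 ρ :=
    intervalIntegrable_pow_weight hω hy le_rfl h1 h0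
  have hb : IntervalIntegrable (fun s => s ^ y * ω s) volume ρ 1 :=
    intervalIntegrable_pow_weight hω hy h0 le_rfl h1
  have key : (∫ s in (0:ℝ)..ρ, s ^ y * ω s) + (∫ s in ρ..1, s ^ y * ω s) = mom ω y :=
    intervalIntegral.integral_add_adjacent_intervals ha hb
  have h2 : 0 ≤ ∫ s in (0:ℝ)..ρ, s ^ y * ω s := by
    apply intervalIntegral.integral_nonneg_of_ae_restrict h0
    filter_upwards [ae_nonneg_restrict hω measurableSet_Icc (Icc_subset_Icc le_rfl h1),
      ae_restrict_mem measurableSet_Icc] with s hs hmem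
    exact mul_nonneg (Real.rpow_nonneg hmem.1 y) hs
  have h3 : ρ ^ y * tl ω ρ ≤ ∫ s in ρ..1, s ^ y * ω s := by
    have hcm : ∫ s in ρ..1, ρ ^ y * ω s = ρ ^ y * ∫ s in ρ..1, ω s :=
      intervalIntegral.integral_const_mul _ _
    rw [tl, ← hcm]
    apply intervalIntegral.integral_mono_ae_restrict h1
      ((intervalIntegrable_weight hω h0 le_rfl h1).const_mul _) hb
    filter_upwards [ae_nonneg_restrict hω measurableSet_Icc (Icc_subset_Icc h0 le_rfl),
      ae_restrict_mem measurableSet_Icc] with s hs hmem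
    exact mul_le_mul_of_nonneg_right (Real.rpow_le_rpow h0 hmem.1 hy) hs
  linarith

lemma tl_pos (hω : IsRadialWeight ω) {r : ℝ} (h0 : 0 ≤ r) (h1 : r < 1) : 0 < tl ω r :=
  hω.2.2 r ⟨h0, h1⟩

lemma mom_pos (hω : IsRadialWeight ω) {y : ℝ} (hy : 0 ≤ y) : 0 < mom ω y :=
  lt_of_lt_of_le
    (mul_pos (Real.rpow_pos_of_pos one_half_pos y) (tl_pos hω (by norm_num) (by norm_num)))
    (mom_ge hω (by norm_num) (by norm_num) hy)

lemma mom_anti (hω : IsRadialWeight ω) {y y' : ℝ} (h0 : 0 ≤ y) (h : y ≤ y') :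
    mom ω y' ≤ mom ω y := by
  apply intervalIntegral.integral_mono_ae_restrict zero_le_one
    (intervalIntegrable_pow_weight hω (h0.trans h) le_rfl le_rfl zero_le_one)
    (intervalIntegrable_pow_weight hω h0 le_rfl le_rfl zero_le_one)
  filter_upwards [ae_nonneg_restrict hω measurableSet_Icc subset_rfl,
    ae_restrict_mem measurableSet_Icc, ae_restrict_of_ae ae_ne_zero] with s hs hmem hs0
  have hsp : 0 < s := lt_of_le_of_ne hmem.1 (Ne.symm hs0)
  exact mul_le_mul_of_nonneg_right (Real.rpow_le_rpow_of_exponent_ge hsp hmem.2 h) hs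

set_option maxHeartbeats 800000 in
lemma summable_aux (hω : IsRadialWeight ω) {t : ℝ} (h0 : 0 ≤ t) (h1 : t < 1) :
    Summable (fun n : ℕ => t ^ n * (2 * mom ω (2 * (n:ℝ) + 1))⁻¹) := by
  set ρ : ℝ := Real.sqrt ((1 + t) / 2) with hρ
  have hρsq : ρ ^ (2:ℕ) = (1 + t) / 2 := Real.sq_sqrt (by linarith)
  have hρpos : 0 < ρ := Real.sqrt_pos.2 (by linarith)
  have hρlt : ρ ≤ 1 := by
    nlinarith [hρsq, hρpos]
  have hmom : ∀ n : ℕ, ρ ^ (2*n+1 : ℕ) * tl ω ρ ≤ mom ω (2 * (n:ℝ) + 1) := by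
    intro n
    have := mom_ge hω hρpos.le hρlt (y := 2 * (n:ℝ) + 1) (by positivity)
    calc ρ ^ (2*n+1 : ℕ) * tl ω ρ = ρ ^ ((2*(n:ℝ)+1) : ℝ) * tl ω ρ := by
          rw [← Real.rpow_natCast ρ (2*n+1)]
          norm_num
      _ ≤ mom ω (2 * (n:ℝ) + 1) := this
  have htl : 0 < tl ω ρ := tl_pos hω hρpos.le (lt_of_le_of_ne hρlt (by
    intro hcon
    rw [hcon] at hρsq
    norm_num at hρsq
    linarith))
  have hg : Summable (fun n : ℕ => (t / ρ^(2:ℕ))^n * (2 * ρ * tl ω ρ)⁻¹) := by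
    apply Summable.mul_right
    apply summable_geometric_of_lt_one (by positivity)
    rw [div_lt_one (by positivity), hρsq]
    linarith
  apply Summable.of_nonneg_of_le (fun n => mul_nonneg (pow_nonneg h0 _)
    (inv_nonneg.2 (mul_nonneg zero_le_two (mom_pos hω (by positivity)).le))) _ hg
  intro n
  have hmn := hmom n
  have hmompos : 0 < mom ω (2 * (n:ℝ) + 1) := mom_pos hω (by positivity)
  have h2 : (2 * mom ω (2 * (n:ℝ) + 1))⁻¹ ≤ (2 * (ρ ^ (2*n+1 : ℕ) * tl ω ρ))⁻¹ := by
    apply inv_anti₀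
    · positivity
    · linarith
  calc t ^ n * (2 * mom ω (2 * (n:ℝ) + 1))⁻¹
      ≤ t ^ n * (2 * (ρ ^ (2*n+1 : ℕ) * tl ω ρ))⁻¹ :=
        mul_le_mul_of_nonneg_left h2 (by positivity)
    _ = (t / ρ^(2:ℕ))^n * (2 * ρ * tl ω ρ)⁻¹ := by
        rw [div_pow, pow_add, pow_mul, pow_one]
        field_simp
        try ring
        try tauto

/-- The test function. -/
def fm (ν : ℝ → ℝ) (m : ℕ) : ℂ → ℂ :=
  fun ζ => ζ ^ m * ((((‖ζ‖ : ℝ) ^ m * tl ν ‖ζ‖)⁻¹ : ℝ) : ℂ)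

lemma polar_term (hν : IsRadialWeight ν) (m n : ℕ) :
    (∫ ζ in unitDisc, fm ν m ζ * ((ω ‖ζ‖ : ℝ) : ℂ) * ((starRingEnd ℂ) ζ) ^ n) =
      if n = m then ((2 * π : ℝ) : ℂ) *
        ((∫ s in Ioo (0:ℝ) 1, s ^ (m+1) * (ω s / tl ν s) : ℝ) : ℂ) else 0 := by
  set U : ℂ → ℂ := fun ζ => fm ν m ζ * ((ω ‖ζ‖ : ℝ) : ℂ) * ((starRingEnd ℂ) ζ) ^ n with hU
  set S : Set (ℝ × ℝ) := Ioo (0:ℝ) 1 ×ˢ Ioo (-π) π with hS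
  set F₁ : ℝ → ℂ := fun s => ((s ^ (n+1) * (ω s / tl ν s) : ℝ) : ℂ) with hF₁
  set F₂ : ℝ → ℂ := fun θ => Complex.exp ((((m:ℝ) - (n:ℝ) : ℝ) : ℂ) * Complex.I * (θ:ℂ)) with hF₂
  have hd : MeasurableSet unitDisc := measurableSet_ball
  have hSm : MeasurableSet S := measurableSet_Ioo.prod measurableSet_Ioo
  have h3 : ∀ p ∈ polarCoord.target,
      p.1 • (indicator unitDisc U) (Complex.polarCoord.symm p) =
        indicator S (fun p : ℝ × ℝ => F₁ p.1 * F₂ p.2) p := by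
    rintro ⟨s, θ⟩ hp
    rw [polarCoord_target] at hp
    obtain ⟨hs, hθ⟩ := hp
    simp only [mem_Ioi] at hs
    set ζ : ℂ := Complex.polarCoord.symm (s, θ) with hζdef
    set E : ℂ := Complex.exp ((θ:ℂ) * Complex.I) with hE
    have hζ : ζ = (s:ℂ) * E := by
      rw [hζdef, Complex.polarCoord_symm_apply, hE, Complex.exp_mul_I]
      push_cast
      ring
    have hnorm : ‖ζ‖ = s := by
      rw [hζ, norm_mul, Complex.norm_real, Real.norm_eq_abs, hE,
        Complex.norm_exp_ofReal_mul_I, abs_of_pos hs, mul_one]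
    by_cases hlt : s < 1
    · have hmem : ζ ∈ unitDisc := by
        simp only [unitDisc, Metric.mem_ball, dist_zero_right, hnorm]
        exact hlt
      have hmemS : ((s, θ) : ℝ × ℝ) ∈ S := ⟨⟨hs, hlt⟩, hθ⟩
      rw [indicator_of_mem hmem, indicator_of_mem hmemS]
      have htl : 0 < tl ν s := tl_pos hν hs.le hlt
      -- exponential identities
      have hE1 : E ^ m = Complex.exp ((m:ℂ) * ((θ:ℂ) * Complex.I)) :=
        (Complex.exp_nat_mul _ m).symm
      have hconjE : (starRingEnd ℂ) E = Complex.exp (-((θ:ℂ) * Complex.I)) := by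
        rw [hE, ← Complex.exp_conj]
        congr 1
        simp [Complex.conj_ofReal]
      have hE2 : ((starRingEnd ℂ) E) ^ n = Complex.exp (-((n:ℂ) * ((θ:ℂ) * Complex.I))) := by
        rw [hconjE, ← Complex.exp_nat_mul]
        congr 1
        ring
      have hprod : E ^ m * ((starRingEnd ℂ) E) ^ n = F₂ θ := by
        rw [hE1, hE2, ← Complex.exp_add, hF₂]
        congr 1
        push_cast
        ring
      have hsne : ((s:ℝ):ℂ) ≠ 0 := by
        simpa using hs.ne'
      have htlne : ((tl ν s : ℝ):ℂ) ≠ 0 := by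
        simpa using htl.ne'
      rw [hU]
      simp only [fm, hnorm]
      rw [hζ]
      rw [map_mul, Complex.conj_ofReal, mul_pow, mul_pow]
      rw [Complex.real_smul, ← hprod, hF₁]
      push_cast
      field_simp
      ring
    · have hmem : ζ ∉ unitDisc := by
        simp only [unitDisc, Metric.mem_ball, dist_zero_right, hnorm]
        linarith
      have hmemS : ((s, θ) : ℝ × ℝ) ∉ S := by
        intro hc
        exact hlt hc.1.2
      rw [indicator_of_notMem hmem, indicator_of_notMem hmemS, smul_zero]
  have h4 : (∫ ζ in unitDisc, U ζ) = ∫ p in S, F₁ p.1 * F₂ p.2 := by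
    rw [← integral_indicator hd, ← Complex.integral_comp_polarCoord_symm,
      setIntegral_congr_fun (polarCoord.open_target.measurableSet) h3,
      setIntegral_indicator hSm]
    congr 1
    rw [polarCoord_target]
    rw [inter_eq_right.2]
    exact prod_mono (Ioo_subset_Ioi_self) subset_rfl
  have h5 : (∫ p in S, F₁ p.1 * F₂ p.2) = (∫ s in Ioo (0:ℝ) 1, F₁ s) * ∫ θ in Ioo (-π) π, F₂ θ := by
    rw [hS, ← setIntegral_prod_mul]
    rw [← Measure.volume_eq_prod]
  have hrad : (∫ s in Ioo (0:ℝ) 1, F₁ s) =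
      ((∫ s in Ioo (0:ℝ) 1, s ^ (n+1) * (ω s / tl ν s) : ℝ) : ℂ) := integral_ofReal
  by_cases hnm : n = m
  · subst hnm
    have hF₂1 : F₂ = fun _ => (1:ℂ) := by
      funext θ
      simp [hF₂]
    have hang : (∫ θ in Ioo (-π) π, F₂ θ) = ((2 * π : ℝ) : ℂ) := by
      rw [hF₂1, setIntegral_const, Real.volume_real_Ioo_of_le (by linarith [Real.pi_pos]),
        Complex.real_smul]
      push_cast
      ring
    rw [h4, h5, hrad, hang, if_pos rfl]
    ring
  · have hc : (((m:ℝ) - (n:ℝ) : ℝ) : ℂ) * Complex.I ≠ 0 := by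
      apply mul_ne_zero _ Complex.I_ne_zero
      simp only [ne_eq, Complex.ofReal_eq_zero, sub_eq_zero]
      exact_mod_cast fun h => hnm (by exact_mod_cast h.symm)
    have hang : (∫ θ in Ioo (-π) π, F₂ θ) = 0 := by
      have heq : (∫ θ in Ioo (-π) π, F₂ θ) = ∫ θ in (-π)..π, F₂ θ := by
        rw [intervalIntegral.integral_of_le (by linarith [Real.pi_pos]),
          integral_Ioc_eq_integral_Ioo]
      rw [heq, hF₂]
      simp only []
      rw [show (fun θ : ℝ => Complex.exp ((((m:ℝ) - (n:ℝ) : ℝ) : ℂ) * Complex.I * (θ:ℂ))) =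
        (fun θ : ℝ => Complex.exp (((((m:ℝ) - (n:ℝ) : ℝ) : ℂ) * Complex.I) * (θ:ℂ))) from rfl]
      rw [integral_exp_mul_complex hc]
      rw [div_eq_zero_iff]
      left
      rw [sub_eq_zero]
      rw [Complex.exp_eq_exp_iff_exists_int]
      refine ⟨(m:ℤ) - (n:ℤ), ?_⟩
      push_cast
      ring
    rw [h4, h5, hang, mul_zero, if_neg hnm]


lemma proj_value (hω : IsRadialWeight ω) (hν : IsRadialWeight ν) (m : ℕ)
    (hW : IntegrableOn (fun ζ => fm ν m ζ * ((ω ‖ζ‖ : ℝ) : ℂ)) unitDisc volume)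
    {z : ℂ} (hz : z ∈ unitDisc) :
    bProj ω (fm ν m) z =
      (((∫ s in Ioo (0:ℝ) 1, s ^ (m+1) * (ω s / tl ν s)) / mom ω (2*(m:ℝ)+1) : ℝ) : ℂ) * z ^ m := by
  have hzn : ‖z‖ < 1 := by
    simpa [unitDisc, Metric.mem_ball, dist_zero_right] using hz
  have hd : MeasurableSet unitDisc := measurableSet_ball
  set c : ℕ → ℝ := fun n => (2 * mom ω (2 * (n:ℝ) + 1))⁻¹ with hc
  have hcpos : ∀ n, 0 < c n := fun n => by
    rw [hc]
    have := mom_pos hω (y := 2 * (n:ℝ) + 1) (by positivity)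
    positivity
  set W : ℂ → ℂ := fun ζ => fm ν m ζ * ((ω ‖ζ‖ : ℝ) : ℂ) with hWdef
  set T : ℕ → ℂ → ℂ := fun n ζ => W ζ * ((z * (starRingEnd ℂ) ζ) ^ n * ((c n : ℝ) : ℂ)) with hT
  have hpt : ∀ ζ : ℂ, bInt ω (fm ν m) z ζ = ∑' n, T n ζ := by
    intro ζ
    rw [bInt, bKer, starRingEnd_apply, tsum_star]
    have hterm : ∀ n : ℕ,
        star (((starRingEnd ℂ) z * ζ) ^ n / ((2 * mom ω (2*(n:ℝ)+1) : ℝ) : ℂ))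
          = (z * (starRingEnd ℂ) ζ) ^ n * ((c n : ℝ) : ℂ) := by
      intro n
      simp only [star_div₀, star_pow, star_mul', RCLike.star_def, Complex.conj_conj,
        Complex.conj_ofReal, hc]
      rw [div_eq_mul_inv, Complex.ofReal_inv]
      try ring
    rw [tsum_congr hterm]
    rw [show (fm ν m ζ * (∑' n, (z * (starRingEnd ℂ) ζ) ^ n * ((c n : ℝ) : ℂ)) * ((ω ‖ζ‖ : ℝ):ℂ))
        = (∑' n, fm ν m ζ * ((z * (starRingEnd ℂ) ζ) ^ n * ((c n : ℝ) : ℂ))) * ((ω ‖ζ‖ : ℝ):ℂ)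
      from by rw [tsum_mul_left]]
    rw [← tsum_mul_right]
    apply tsum_congr
    intro n
    rw [hT, hWdef]
    ring
  have hcont : ∀ n : ℕ, Continuous (fun ζ : ℂ => (z * (starRingEnd ℂ) ζ) ^ n * ((c n : ℝ) : ℂ)) :=
    fun n => (((continuous_const.mul continuous_conj).pow n).mul continuous_const)
  have hmeas : ∀ n, AEStronglyMeasurable (T n) (volume.restrict unitDisc) := fun n =>
    hW.aestronglyMeasurable.mul ((hcont n).aestronglyMeasurable)
  have hJfin : (∫⁻ ζ in unitDisc, ‖W ζ‖₊ ∂volume) < ⊤ := hW.hasFiniteIntegral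
  have hbound : ∀ n, (∫⁻ ζ in unitDisc, ‖T n ζ‖₊ ∂volume)
      ≤ ENNReal.ofReal (‖z‖^n * c n) * ∫⁻ ζ in unitDisc, ‖W ζ‖₊ ∂volume := by
    intro n
    rw [← lintegral_const_mul' _ _ ENNReal.ofReal_ne_top]
    apply lintegral_mono_ae
    filter_upwards [ae_restrict_mem hd] with ζ hζ
    have hζn : ‖ζ‖ ≤ 1 := by
      have : ‖ζ‖ < 1 := by simpa [unitDisc, Metric.mem_ball, dist_zero_right] using hζ
      linarith
    have hnorm : ‖T n ζ‖ ≤ (‖z‖^n * c n) * ‖W ζ‖ := by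
      have h1 : ‖z * (starRingEnd ℂ) ζ‖ ≤ ‖z‖ := by
        rw [norm_mul, RCLike.norm_conj]
        calc ‖z‖ * ‖ζ‖ ≤ ‖z‖ * 1 := mul_le_mul_of_nonneg_left hζn (norm_nonneg z)
          _ = ‖z‖ := mul_one _
      have h2 : ‖((c n : ℝ):ℂ)‖ = c n := by
        rw [Complex.norm_real, Real.norm_eq_abs, _root_.abs_of_nonneg (hcpos n).le]
      have h3 : ‖z * (starRingEnd ℂ) ζ‖ ^ n ≤ ‖z‖ ^ n :=
        pow_le_pow_left₀ (norm_nonneg _) h1 n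
      have hnn : ‖T n ζ‖ = ‖W ζ‖ * (‖z * (starRingEnd ℂ) ζ‖ ^ n * c n) := by
        rw [hT, hWdef]
        simp only [norm_mul, norm_pow, h2]
        try ring
      rw [hnn]
      calc ‖W ζ‖ * (‖z * (starRingEnd ℂ) ζ‖ ^ n * c n)
          ≤ ‖W ζ‖ * (‖z‖ ^ n * c n) := by
            apply mul_le_mul_of_nonneg_left _ (norm_nonneg _)
            exact mul_le_mul_of_nonneg_right h3 (hcpos n).le
        _ = ‖z‖^n * c n * ‖W ζ‖ := by ring
    calc (‖T n ζ‖₊ : ℝ≥0∞) = ENNReal.ofReal ‖T n ζ‖ := (ofReal_norm _).symm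
      _ ≤ ENNReal.ofReal ((‖z‖^n * c n) * ‖W ζ‖) := ENNReal.ofReal_le_ofReal hnorm
      _ = ENNReal.ofReal (‖z‖^n * c n) * ENNReal.ofReal ‖W ζ‖ := by
          rw [ENNReal.ofReal_mul (mul_nonneg (pow_nonneg (norm_nonneg z) n) (hcpos n).le)]
      _ = ENNReal.ofReal (‖z‖^n * c n) * ‖W ζ‖₊ := by rw [ofReal_norm, enorm_eq_nnnorm]
  have hsummable : Summable (fun n : ℕ => ‖z‖^n * c n) := by
    have := summable_aux hω (norm_nonneg z) hzn
    simpa [hc] using this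
  have hsum : (∑' n, ∫⁻ ζ in unitDisc, ‖T n ζ‖₊ ∂volume) ≠ ⊤ := by
    have hle : (∑' n, ∫⁻ ζ in unitDisc, ‖T n ζ‖₊ ∂volume)
        ≤ (∑' n, ENNReal.ofReal (‖z‖^n * c n)) * ∫⁻ ζ in unitDisc, ‖W ζ‖₊ ∂volume :=
      calc (∑' n, ∫⁻ ζ in unitDisc, ‖T n ζ‖₊ ∂volume)
          ≤ ∑' n, ENNReal.ofReal (‖z‖^n * c n) * ∫⁻ ζ in unitDisc, ‖W ζ‖₊ ∂volume :=
            ENNReal.tsum_le_tsum hbound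
        _ = (∑' n, ENNReal.ofReal (‖z‖^n * c n)) * ∫⁻ ζ in unitDisc, ‖W ζ‖₊ ∂volume :=
            ENNReal.tsum_mul_right
    have h1 : (∑' n, ENNReal.ofReal (‖z‖^n * c n)) = ENNReal.ofReal (∑' n, ‖z‖^n * c n) :=
      (ENNReal.ofReal_tsum_of_nonneg
        (fun n => mul_nonneg (pow_nonneg (norm_nonneg z) n) (hcpos n).le) hsummable).symm
    rw [h1] at hle
    exact ne_top_of_le_ne_top (ENNReal.mul_ne_top ENNReal.ofReal_ne_top hJfin.ne) hle
  have hval : (∫ ζ in unitDisc, bInt ω (fm ν m) z ζ) = ∑' n, ∫ ζ in unitDisc, T n ζ := by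
    rw [show bInt ω (fm ν m) z = fun ζ => ∑' n, T n ζ from funext hpt]
    exact integral_tsum hmeas hsum
  have hTn : ∀ n, (∫ ζ in unitDisc, T n ζ) = (z^n * ((c n : ℝ):ℂ)) *
      ∫ ζ in unitDisc, fm ν m ζ * ((ω ‖ζ‖:ℝ):ℂ) * ((starRingEnd ℂ) ζ)^n := by
    intro n
    rw [← integral_const_mul]
    apply setIntegral_congr_fun hd
    intro ζ _
    show W ζ * ((z * (starRingEnd ℂ) ζ) ^ n * ((c n : ℝ) : ℂ))
      = z ^ n * ((c n : ℝ):ℂ) * (fm ν m ζ * ((ω ‖ζ‖:ℝ):ℂ) * ((starRingEnd ℂ) ζ) ^ n)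
    rw [hWdef]
    ring
  have hfinal : (∫ ζ in unitDisc, bInt ω (fm ν m) z ζ)
      = (z^m * ((c m : ℝ):ℂ)) * (((2 * π : ℝ) : ℂ) *
        ((∫ s in Ioo (0:ℝ) 1, s ^ (m+1) * (ω s / tl ν s) : ℝ) : ℂ)) := by
    rw [hval]
    rw [tsum_eq_single m]
    · rw [hTn m, polar_term hν m m, if_pos rfl]
    · intro n hn
      rw [hTn n, polar_term hν m n, if_neg hn, mul_zero]
  rw [bProj, hfinal]
  have hπC : ((π:ℝ):ℂ) ≠ 0 := Complex.ofReal_ne_zero.mpr Real.pi_ne_zero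
  have hmC : ((mom ω (2*(m:ℝ)+1) : ℝ):ℂ) ≠ 0 :=
    Complex.ofReal_ne_zero.mpr (mom_pos hω (by positivity)).ne'
  have hcm : ((c m : ℝ):ℂ) = (2 * ((mom ω (2*(m:ℝ)+1) : ℝ):ℂ))⁻¹ := by
    rw [hc]
    push_cast
    ring
  rw [hcm]
  push_cast
  field_simp


lemma mem_disc_iff {ζ : ℂ} : ζ ∈ unitDisc ↔ ‖ζ‖ < 1 := by
  simp [unitDisc, Metric.mem_ball, dist_zero_right]

lemma fm_aesm (hν : IsRadialWeight ν) (m : ℕ) :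
    AEStronglyMeasurable (fm ν m) (volume.restrict unitDisc) := by
  have hg : ContinuousOn (fun ζ : ℂ => (‖ζ‖:ℝ)^m * tl ν ‖ζ‖) unitDisc := by
    have h1 : ContinuousOn (tl ν) (Icc 0 1) := tl_continuousOn hν
    have hmap : MapsTo (fun ζ : ℂ => ‖ζ‖) unitDisc (Icc 0 1) := fun ζ hζ =>
      ⟨norm_nonneg _, le_of_lt (mem_disc_iff.1 hζ)⟩
    exact (continuous_norm.continuousOn.pow m).mul
      (h1.comp continuous_norm.continuousOn hmap)
  have haem : AEMeasurable (fun ζ : ℂ => (((‖ζ‖:ℝ)^m * tl ν ‖ζ‖)⁻¹ : ℝ))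
      (volume.restrict unitDisc) :=
    (hg.aemeasurable measurableSet_ball).inv
  exact (continuous_pow m).aestronglyMeasurable.mul
    ((Complex.measurable_ofReal.comp_aemeasurable haem).aestronglyMeasurable)

lemma fm_bound (hν : IsRadialWeight ν) (m : ℕ) {ζ : ℂ} (hζ : ζ ∈ unitDisc) :
    ‖fm ν m ζ‖ * tl ν ‖ζ‖ ≤ 1 := by
  have hζ1 : ‖ζ‖ < 1 := mem_disc_iff.1 hζ
  have htl : 0 < tl ν ‖ζ‖ := tl_pos hν (norm_nonneg _) hζ1
  have hnorm : ‖fm ν m ζ‖ = ‖ζ‖^m * |((‖ζ‖:ℝ)^m * tl ν ‖ζ‖)⁻¹| := by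
    rw [fm, norm_mul, norm_pow, Complex.norm_real, Real.norm_eq_abs]
  rw [hnorm]
  rcases eq_or_ne (‖ζ‖^m) 0 with h0 | h0
  · rw [h0]
    norm_num
  · rw [abs_inv, _root_.abs_of_nonneg (mul_nonneg (pow_nonneg (norm_nonneg _) m) htl.le)]
    rw [mul_inv]
    have heq2 : ‖ζ‖ ^ m * ((‖ζ‖ ^ m)⁻¹ * (tl ν ‖ζ‖)⁻¹) * tl ν ‖ζ‖
        = (‖ζ‖^m * (‖ζ‖^m)⁻¹) * ((tl ν ‖ζ‖)⁻¹ * tl ν ‖ζ‖) := by ring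
    rw [heq2, mul_inv_cancel₀ h0, inv_mul_cancel₀ htl.ne', mul_one]

lemma fm_wSup (hν : IsRadialWeight ν) (m : ℕ) : wSup (tl ν) (fm ν m) ≤ 1 := by
  refine essSup_le_of_ae_le _ ?_
  filter_upwards [ae_restrict_mem (measurableSet_ball : MeasurableSet unitDisc)] with ζ hζ
  calc ENNReal.ofReal (‖fm ν m ζ‖ * tl ν ‖ζ‖) ≤ ENNReal.ofReal 1 :=
        ENNReal.ofReal_le_ofReal (fm_bound hν m hζ)
    _ = 1 := ENNReal.ofReal_one

lemma pow_bound {m : ℕ} (hm : 1 ≤ m) : (3:ℝ)⁻¹ ≤ (1 - 1/(m:ℝ))^(m-1) := by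
  rcases eq_or_lt_of_le hm with h1 | h2
  · rw [← h1]
    norm_num
  · have hm2 : 2 ≤ m := h2
    set a : ℕ := m - 1 with ha
    have haa : 1 ≤ a := by omega
    have hma : m = a + 1 := by omega
    have hapos : (0:ℝ) < a := by exact_mod_cast haa
    have key : ((1:ℝ) + 1/(a:ℝ))^a ≤ 3 := by
      have h1 : (1:ℝ) + 1/(a:ℝ) ≤ Real.exp (1/(a:ℝ)) := by
        have := Real.add_one_le_exp (1/(a:ℝ))
        linarith
      have h2' : ((1:ℝ) + 1/(a:ℝ))^a ≤ Real.exp (1/(a:ℝ))^a := by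
        apply pow_le_pow_left₀ (by positivity) h1
      have h3 : Real.exp (1/(a:ℝ))^a = Real.exp ((a:ℝ) * (1/(a:ℝ))) := by
        rw [Real.exp_nat_mul]
      have h4 : (a:ℝ) * (1/(a:ℝ)) = 1 := by
        field_simp
      have h5 : Real.exp 1 < 3 := lt_trans Real.exp_one_lt_d9 (by norm_num)
      rw [h3, h4] at h2'
      linarith
    have heq : (1 - 1/(m:ℝ)) = ((1:ℝ) + 1/(a:ℝ))⁻¹ := by
      rw [hma]
      push_cast
      rw [inv_eq_one_div]
      field_simp
      ring
    rw [heq]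
    have hxpos : (0:ℝ) < ((1:ℝ) + 1/(a:ℝ))^a := by positivity
    have heq3 : (((1:ℝ) + 1/(a:ℝ))⁻¹)^(m-1) = (((1:ℝ) + 1/(a:ℝ))^a)⁻¹ := by
      rw [inv_pow, ha]
    rw [heq3]
    exact inv_anti₀ hxpos key


lemma key_est (hω : IsRadialWeight ω) (hν : IsRadialWeight ν) {C₀ : ℝ} (hC₀ : 0 < C₀)
    {m : ℕ} (hm : 1 ≤ m)
    (hint : IntegrableOn (bInt ω (fm ν m) 0) unitDisc volume)
    (hbl : ∀ z ∈ unitDisc,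
      ENNReal.ofReal ((1 - ‖z‖) * tl ν ‖z‖ * ‖deriv (bProj ω (fm ν m)) z‖) ≤
        ENNReal.ofReal C₀ * wSup (tl ν) (fm ν m)) :
    (∫ s in Ioo (0:ℝ) 1, s ^ (m+1) * (ω s / tl ν s)) * tl ν (1 - 1/(m:ℝ))
      ≤ 3 * C₀ * mom ω (2*(m:ℝ)+1) := by
  set K : ℝ := ∫ s in Ioo (0:ℝ) 1, s ^ (m+1) * (ω s / tl ν s) with hK
  have hK0 : 0 ≤ K := by
    rw [hK]
    apply setIntegral_nonneg_of_ae_restrict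
    filter_upwards [ae_nonneg_restrict hω measurableSet_Ioo (Ioo_subset_Icc_self),
      ae_restrict_mem measurableSet_Ioo] with s hs hmem
    have htl : 0 < tl ν s := tl_pos hν hmem.1.le hmem.2
    have : 0 ≤ ω s / tl ν s := div_nonneg hs htl.le
    exact mul_nonneg (pow_nonneg hmem.1.le _) this
  have hmompos : 0 < mom ω (2*(m:ℝ)+1) := mom_pos hω (by positivity)
  have hker0 : ∀ ζ : ℂ, bKer ω 0 ζ = ((2 * mom ω 1 : ℝ):ℂ)⁻¹ := by
    intro ζ
    rw [bKer, tsum_eq_single 0]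
    · norm_num
    · intro n hn
      rw [map_zero, zero_mul, zero_pow hn, zero_div]
  have hm1pos : 0 < mom ω 1 := mom_pos hω zero_le_one
  have hWint : IntegrableOn (fun ζ => fm ν m ζ * ((ω ‖ζ‖ : ℝ) : ℂ)) unitDisc volume := by
    have heq : (fun ζ => fm ν m ζ * ((ω ‖ζ‖ : ℝ) : ℂ))
        = fun ζ => ((2 * mom ω 1 : ℝ):ℂ) * bInt ω (fm ν m) 0 ζ := by
      funext ζ
      rw [bInt, hker0 ζ]
      rw [map_inv₀, Complex.conj_ofReal]
      have hne : ((2 * mom ω 1 : ℝ):ℂ) ≠ 0 := by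
        simp only [ne_eq, Complex.ofReal_eq_zero]
        have h2 : (0:ℝ) < 2 * mom ω 1 := by linarith
        exact h2.ne'
      have hmne : ((mom ω 1 : ℝ):ℂ) ≠ 0 := by
        simp only [ne_eq, Complex.ofReal_eq_zero]
        exact hm1pos.ne'
      field_simp
      try rw [mul_assoc, mul_inv_cancel₀ hmne, mul_one]
      try ring
    rw [heq]
    exact hint.const_mul _
  set Kc : ℂ := ((K / mom ω (2*(m:ℝ)+1) : ℝ) : ℂ) with hKc
  have hEq : EqOn (bProj ω (fm ν m)) (fun z => Kc * z^m) unitDisc := fun z hz =>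
    proj_value hω hν m hWint hz
  set r : ℝ := 1 - 1/(m:ℝ) with hr
  have hmpos : (0:ℝ) < m := by exact_mod_cast hm
  have hr0 : 0 ≤ r := by
    rw [hr]
    have : 1/(m:ℝ) ≤ 1 := by
      rw [div_le_one hmpos]
      exact_mod_cast hm
    linarith
  have hrlt : r < 1 := by
    rw [hr]
    have : 0 < 1/(m:ℝ) := by positivity
    linarith
  set z₀ : ℂ := ((r:ℝ):ℂ) with hz₀def
  have hz₀n : ‖z₀‖ = r := by
    rw [hz₀def, Complex.norm_real, Real.norm_eq_abs, _root_.abs_of_nonneg hr0]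
  have hz₀ : z₀ ∈ unitDisc := mem_disc_iff.2 (by rw [hz₀n]; exact hrlt)
  have hderiv : deriv (bProj ω (fm ν m)) z₀ = Kc * ((m:ℂ) * z₀^(m-1)) := by
    have hev : bProj ω (fm ν m) =ᶠ[nhds z₀] fun z => Kc * z^m :=
      Filter.eventuallyEq_of_mem (Metric.isOpen_ball.mem_nhds hz₀) hEq
    rw [hev.deriv_eq, deriv_const_mul _ (differentiableAt_pow m), deriv_pow_field]
    try ring
  have hwle : ENNReal.ofReal C₀ * wSup (tl ν) (fm ν m) ≤ ENNReal.ofReal C₀ := by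
    calc ENNReal.ofReal C₀ * wSup (tl ν) (fm ν m) ≤ ENNReal.ofReal C₀ * 1 :=
          mul_le_mul_right (fm_wSup hν m) _
      _ = ENNReal.ofReal C₀ := mul_one _
  have hreal : (1 - ‖z₀‖) * tl ν ‖z₀‖ * ‖deriv (bProj ω (fm ν m)) z₀‖ ≤ C₀ :=
    (ENNReal.ofReal_le_ofReal_iff hC₀.le).1 ((hbl z₀ hz₀).trans hwle)
  have hnd : ‖deriv (bProj ω (fm ν m)) z₀‖ = K / mom ω (2*(m:ℝ)+1) * ((m:ℝ) * r^(m-1)) := by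
    rw [hderiv, norm_mul, norm_mul, norm_pow, hz₀n]
    rw [hKc, Complex.norm_real, Real.norm_eq_abs,
      _root_.abs_of_nonneg (div_nonneg hK0 hmompos.le), Complex.norm_natCast]
  rw [hz₀n, hnd] at hreal
  have h1r : 1 - r = 1/(m:ℝ) := by rw [hr]; ring
  have htlr : 0 < tl ν r := tl_pos hν hr0 hrlt
  have hrm : (3:ℝ)⁻¹ ≤ r^(m-1) := pow_bound hm
  have hstep : K * tl ν r * r^(m-1) ≤ C₀ * mom ω (2*(m:ℝ)+1) := by
    rw [h1r] at hreal
    have hexp : 1/(m:ℝ) * tl ν r * (K / mom ω (2*(m:ℝ)+1) * ((m:ℝ) * r^(m-1)))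
        = K * tl ν r * r^(m-1) / mom ω (2*(m:ℝ)+1) := by
      field_simp
    rw [hexp, div_le_iff₀ hmompos] at hreal
    linarith
  have hrmnn : (0:ℝ) ≤ r^(m-1) := pow_nonneg hr0 _
  calc K * tl ν r = 3 * (K * tl ν r * 3⁻¹) := by ring
    _ ≤ 3 * (K * tl ν r * r^(m-1)) := by
        apply mul_le_mul_of_nonneg_left _ (by norm_num)
        exact mul_le_mul_of_nonneg_left hrm (mul_nonneg hK0 htlr.le)
    _ ≤ 3 * (C₀ * mom ω (2*(m:ℝ)+1)) := by linarith
    _ = 3 * C₀ * mom ω (2*(m:ℝ)+1) := by ring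

end Aux

set_option maxHeartbeats 1600000 in
open Aux in
/-- Proposition: if `P_ω : L^∞_ν̂ → B^∞_ν̂` is bounded, then
`(ω/ν̂)_x ≤ C ω_{2x} / ν̂(1 - 1/x)` for all `x ≥ 1`. -/
theorem stmt18 (ω ν : ℝ → ℝ) (hω : IsRadialWeight ω) (hν : IsRadialWeight ν)
    (hb : ProjBddB ω (tl ν)) :
    ∃ C : ℝ, 0 < C ∧ ∀ x : ℝ, 1 ≤ x →
      mom (fun s => ω s / tl ν s) x ≤ C * mom ω (2 * x) / tl ν (1 - 1 / x) := by
  classical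
  obtain ⟨C₀, hC₀, hball⟩ := hb
  have htlν0 : 0 < tl ν 0 := Aux.tl_pos hν le_rfl one_pos
  have htlνh : 0 < tl ν (1/2) := Aux.tl_pos hν (by norm_num) (by norm_num)
  have htlω34 : 0 < tl ω (3/4 : ℝ) := Aux.tl_pos hω (by norm_num) (by norm_num)
  set A : ℝ := ∫ s in Ioo (0:ℝ) 1, |ω s| with hA
  have hsubIco : Ioo (0:ℝ) 1 ⊆ Ico (0:ℝ) 1 := Ioo_subset_Ico_self
  have hAint : IntegrableOn (fun s => |ω s|) (Ioo (0:ℝ) 1) volume :=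
    (hω.2.1.mono_set hsubIco).abs
  have hA0 : 0 ≤ A := setIntegral_nonneg measurableSet_Ioo (fun s _ => abs_nonneg _)
  set L₂ : ℝ := (tl ν (1/2))⁻¹ * A with hL₂
  have hL₂0 : 0 ≤ L₂ := mul_nonneg (inv_nonneg.2 htlνh.le) hA0
  set D : ℝ := L₂ * tl ν 0 + 6 * C₀ * A with hD
  have hD0 : 0 ≤ D := by
    have := mul_nonneg hL₂0 htlν0.le
    have := mul_nonneg (mul_nonneg (by norm_num : (0:ℝ) ≤ 6) hC₀.le) hA0
    rw [hD]
    linarith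
  set C : ℝ := D / tl ω (3/4) + 12 * C₀ with hCdef
  have hCpos : 0 < C := by
    have h1 : 0 ≤ D / tl ω (3/4) := div_nonneg hD0 htlω34.le
    rw [hCdef]
    linarith
  refine ⟨C, hCpos, ?_⟩
  intro x hx1
  have hx0 : (0:ℝ) < x := lt_of_lt_of_le one_pos hx1
  have h1x0 : 0 ≤ 1 - 1/x := by
    have : 1/x ≤ 1 := by
      rw [div_le_one hx0]
      exact hx1
    linarith
  have h1x1 : 1 - 1/x < 1 := by
    have : 0 < 1/x := by positivity
    linarith
  have htlx : 0 < tl ν (1 - 1/x) := Aux.tl_pos hν h1x0 h1x1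
  have hmomx0 : 0 ≤ mom ω (2*x) := (Aux.mom_pos hω (by positivity)).le
  by_cases hI : IntervalIntegrable (fun s => s ^ x * (ω s / tl ν s)) volume 0 1
  swap
  · rw [mom, intervalIntegral.integral_undef hI]
    positivity
  rw [le_div_iff₀ htlx]
  -- setup
  set μf : ℝ → ℝ := fun s => ω s / tl ν s with hμf
  set m : ℕ := ⌊x⌋₊ with hmdef
  have hm1 : 1 ≤ m := Nat.le_floor (by exact_mod_cast hx1)
  have hmx : (m:ℝ) ≤ x := Nat.floor_le hx0.le
  have hxm : x < (m:ℝ) + 1 := Nat.lt_floor_add_one x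
  have hmpos : (0:ℝ) < m := by exact_mod_cast hm1
  -- apply the boundedness hypothesis to the test function
  have hwlt : wSup (tl ν) (Aux.fm ν m) < ⊤ :=
    lt_of_le_of_lt (Aux.fm_wSup hν m) ENNReal.one_lt_top
  obtain ⟨hint, _hdiff, hbl⟩ := hball (Aux.fm ν m) (Aux.fm_aesm hν m) hwlt
  have h0disc : (0:ℂ) ∈ unitDisc := by
    rw [Aux.mem_disc_iff]
    simp
  have hkey := Aux.key_est hω hν hC₀ hm1 (hint 0 h0disc) hbl
  set Km : ℝ := ∫ s in Ioo (0:ℝ) 1, s ^ (m+1) * (ω s / tl ν s) with hKm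
  -- ae facts
  have haeω : 0 ≤ᵐ[volume.restrict (Ioo (0:ℝ) 1)] ω :=
    Aux.ae_nonneg_restrict hω measurableSet_Ioo Ioo_subset_Icc_self
  have haeμ : 0 ≤ᵐ[volume.restrict (Ioo (0:ℝ) 1)] μf := by
    filter_upwards [haeω, ae_restrict_mem measurableSet_Ioo] with s hs hmem
    exact div_nonneg hs (Aux.tl_pos hν hmem.1.le hmem.2).le
  -- measurability of μf
  have hμaesm : AEStronglyMeasurable μf (volume.restrict (Ioo (0:ℝ) 1)) := by
    have hωm : AEStronglyMeasurable ω (volume.restrict (Ioo (0:ℝ) 1)) :=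
      hω.2.1.aestronglyMeasurable.mono_measure
        (Measure.restrict_mono Ioo_subset_Ico_self le_rfl)
    have htlm : AEMeasurable (fun s => (tl ν s)⁻¹) (volume.restrict (Ioo (0:ℝ) 1)) :=
      (((Aux.tl_continuousOn hν).mono Ioo_subset_Icc_self).aemeasurable measurableSet_Ioo).inv
    have := hωm.mul htlm.aestronglyMeasurable
    exact this.congr (Filter.Eventually.of_forall fun s => by simp [hμf, div_eq_mul_inv])
  -- integrability facts
  have hIoo : IntegrableOn (fun s => s ^ x * μf s) (Ioo (0:ℝ) 1) volume := by
    rw [intervalIntegrable_iff_integrableOn_Ioo_of_le zero_le_one] at hI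
    exact hI
  have hmom_eq : mom μf x = ∫ s in Ioo (0:ℝ) 1, s ^ x * μf s := by
    rw [mom, intervalIntegral.integral_of_le zero_le_one, integral_Ioc_eq_integral_Ioo]
  have hIm : IntegrableOn (fun s => s ^ (m+1) * μf s) (Ioo (0:ℝ) 1) volume := by
    apply Integrable.mono hIoo
    · exact ((measurable_id.pow_const (m+1)).aestronglyMeasurable.mul hμaesm)
    · filter_upwards [ae_restrict_mem measurableSet_Ioo] with s hs
      have hs0 : (0:ℝ) < s := hs.1
      have hs1 : s ≤ 1 := hs.2.le
      have hcast : s ^ (m+1) = s ^ (((m:ℝ)+1) : ℝ) := by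
        rw [← Real.rpow_natCast s (m+1)]
        norm_num
      have hple : s ^ (m+1) ≤ s ^ x := by
        rw [hcast]
        exact Real.rpow_le_rpow_of_exponent_ge hs0 hs1 hxm.le
      rw [Real.norm_eq_abs, Real.norm_eq_abs, abs_mul, abs_mul]
      apply mul_le_mul_of_nonneg_right _ (abs_nonneg _)
      rw [_root_.abs_of_nonneg (pow_nonneg hs0.le _),
        _root_.abs_of_nonneg (Real.rpow_nonneg hs0.le _)]
      exact hple
  have hKm0 : 0 ≤ Km := setIntegral_nonneg_of_ae_restrict (by
    filter_upwards [haeμ, ae_restrict_mem measurableSet_Ioo] with s hs hmem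
    exact mul_nonneg (pow_nonneg hmem.1.le _) hs)
  -- split of the main integral at 1/2
  have hsub1 : Ioc (0:ℝ) (1/2) ⊆ Ioo (0:ℝ) 1 := fun s hs => ⟨hs.1, lt_of_le_of_lt hs.2 (by norm_num)⟩
  have hsub2 : Ioo (1/2:ℝ) 1 ⊆ Ioo (0:ℝ) 1 := fun s hs => ⟨lt_trans (by norm_num) hs.1, hs.2⟩
  have hdisj : Disjoint (Ioc (0:ℝ) (1/2)) (Ioo (1/2:ℝ) 1) := by
    rw [Set.disjoint_left]
    rintro s ⟨_, h1⟩ ⟨h2, _⟩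
    linarith
  have hunion : Ioc (0:ℝ) (1/2) ∪ Ioo (1/2:ℝ) 1 = Ioo (0:ℝ) 1 :=
    Ioc_union_Ioo_eq_Ioo (by norm_num) (by norm_num)
  have hsplit : (∫ s in Ioo (0:ℝ) 1, s ^ x * μf s)
      = (∫ s in Ioc (0:ℝ) (1/2), s ^ x * μf s) + ∫ s in Ioo (1/2:ℝ) 1, s ^ x * μf s := by
    rw [← hunion, setIntegral_union hdisj measurableSet_Ioo
      (hIoo.mono_set hsub1) (hIoo.mono_set hsub2)]
  -- bound on (0,1/2]
  have hb1 : (∫ s in Ioc (0:ℝ) (1/2), s ^ x * μf s) ≤ (1/2:ℝ)^x * L₂ := by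
    have hgint : IntegrableOn (fun s => (1/2:ℝ)^x * ((tl ν (1/2))⁻¹ * |ω s|))
        (Ioc (0:ℝ) (1/2)) volume :=
      ((hAint.mono_set hsub1).const_mul _).const_mul _
    have hmono : (∫ s in Ioc (0:ℝ) (1/2), s ^ x * μf s)
        ≤ ∫ s in Ioc (0:ℝ) (1/2), (1/2:ℝ)^x * ((tl ν (1/2))⁻¹ * |ω s|) := by
      apply setIntegral_mono_ae_restrict (hIoo.mono_set hsub1) hgint
      filter_upwards [ae_restrict_mem measurableSet_Ioc] with s hs
      have hs0 : (0:ℝ) < s := hs.1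
      have hsh : s ≤ 1/2 := hs.2
      have hs1 : s < 1 := lt_of_le_of_lt hsh (by norm_num)
      have htls : 0 < tl ν s := Aux.tl_pos hν hs0.le hs1
      have htlc : tl ν (1/2) ≤ tl ν s := Aux.tl_antitone hν hs0.le hsh (by norm_num)
      have h1 : μf s ≤ (tl ν (1/2))⁻¹ * |ω s| := by
        rw [hμf]
        calc ω s / tl ν s ≤ |ω s| / tl ν s := by
              gcongr
              exact le_abs_self _
          _ ≤ |ω s| / tl ν (1/2) := by
              apply div_le_div_of_nonneg_left (abs_nonneg _) htlνh htlc
          _ = (tl ν (1/2))⁻¹ * |ω s| := by rw [div_eq_mul_inv]; ring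
      have h2 : s ^ x ≤ (1/2:ℝ)^x := Real.rpow_le_rpow hs0.le hsh hx0.le
      calc s ^ x * μf s ≤ s ^ x * ((tl ν (1/2))⁻¹ * |ω s|) := by
            apply mul_le_mul_of_nonneg_left h1 (Real.rpow_nonneg hs0.le _)
        _ ≤ (1/2:ℝ)^x * ((tl ν (1/2))⁻¹ * |ω s|) := by
            apply mul_le_mul_of_nonneg_right h2
            exact mul_nonneg (inv_nonneg.2 htlνh.le) (abs_nonneg _)
    have hval : (∫ s in Ioc (0:ℝ) (1/2), (1/2:ℝ)^x * ((tl ν (1/2))⁻¹ * |ω s|))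
        = (1/2:ℝ)^x * ((tl ν (1/2))⁻¹ * ∫ s in Ioc (0:ℝ) (1/2), |ω s|) := by
      rw [integral_const_mul, integral_const_mul]
    have habs : (∫ s in Ioc (0:ℝ) (1/2), |ω s|) ≤ A := by
      rw [hA]
      apply setIntegral_mono_set hAint
      · filter_upwards with s using abs_nonneg _
      · exact HasSubset.Subset.eventuallyLE hsub1
    calc (∫ s in Ioc (0:ℝ) (1/2), s ^ x * μf s)
        ≤ (1/2:ℝ)^x * ((tl ν (1/2))⁻¹ * ∫ s in Ioc (0:ℝ) (1/2), |ω s|) := by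
          rw [← hval]; exact hmono
      _ ≤ (1/2:ℝ)^x * ((tl ν (1/2))⁻¹ * A) := by
          apply mul_le_mul_of_nonneg_left _ (Real.rpow_nonneg (by norm_num) _)
          exact mul_le_mul_of_nonneg_left habs (inv_nonneg.2 htlνh.le)
      _ = (1/2:ℝ)^x * L₂ := by rw [hL₂]
  -- bound on (1/2,1)
  have hb2 : (∫ s in Ioo (1/2:ℝ) 1, s ^ x * μf s) ≤ 2 * Km := by
    have hmono : (∫ s in Ioo (1/2:ℝ) 1, s ^ x * μf s)
        ≤ ∫ s in Ioo (1/2:ℝ) 1, 2 * (s ^ (m+1) * μf s) := by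
      apply setIntegral_mono_ae_restrict (hIoo.mono_set hsub2) ((hIm.mono_set hsub2).const_mul 2)
      have haeμ2 : 0 ≤ᵐ[volume.restrict (Ioo (1/2:ℝ) 1)] μf :=
        ae_restrict_of_ae_restrict_of_subset hsub2 haeμ
      filter_upwards [ae_restrict_mem measurableSet_Ioo, haeμ2] with s hs hμs
      have hs0 : (0:ℝ) < s := lt_trans (by norm_num) hs.1
      have hsh : (1/2:ℝ) ≤ s := hs.1.le
      have hs1 : s ≤ 1 := hs.2.le
      have hcast : s ^ (m+1) = s ^ (((m:ℝ)+1) : ℝ) := by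
        rw [← Real.rpow_natCast s (m+1)]
        norm_num
      have hkey2 : s ^ x ≤ 2 * s ^ (m+1) := by
        rw [hcast]
        have hsplit2 : s ^ (((m:ℝ)+1) : ℝ) = s ^ x * s ^ ((m:ℝ)+1-x) := by
          rw [← Real.rpow_add hs0]
          ring_nf
        have hge : s ^ ((m:ℝ)+1-x) ≥ s ^ (1:ℝ) :=
          Real.rpow_le_rpow_of_exponent_ge hs0 hs1 (by linarith)
        have : s ^ (1:ℝ) = s := Real.rpow_one s
        have h12 : (1/2:ℝ) ≤ s ^ ((m:ℝ)+1-x) := by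
          rw [this] at hge
          linarith
        have hxnn : 0 ≤ s ^ x := Real.rpow_nonneg hs0.le _
        have hmul := mul_le_mul_of_nonneg_left h12 hxnn
        rw [hsplit2]
        linarith
      exact mul_le_mul_of_nonneg_right hkey2 hμs |>.trans_eq (by ring)
    have hstep : (∫ s in Ioo (1/2:ℝ) 1, s ^ (m+1) * μf s) ≤ Km := by
      rw [hKm]
      apply setIntegral_mono_set hIm
      · filter_upwards [haeμ, ae_restrict_mem measurableSet_Ioo] with s hs hmem
        exact mul_nonneg (pow_nonneg hmem.1.le _) hs
      · exact HasSubset.Subset.eventuallyLE hsub2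
    calc (∫ s in Ioo (1/2:ℝ) 1, s ^ x * μf s)
        ≤ ∫ s in Ioo (1/2:ℝ) 1, 2 * (s ^ (m+1) * μf s) := hmono
      _ = 2 * ∫ s in Ioo (1/2:ℝ) 1, s ^ (m+1) * μf s := integral_const_mul 2 _
      _ ≤ 2 * Km := by linarith [hstep]
  -- comparison of tails
  have htlcomp : tl ν (1 - 1/x) ≤ tl ν (1 - 1/(m:ℝ)) := by
    have h1 : 1/x ≤ 1/(m:ℝ) := one_div_le_one_div_of_le hmpos hmx
    have h2 : 0 ≤ 1 - 1/(m:ℝ) := by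
      have : 1/(m:ℝ) ≤ 1 := by
        rw [div_le_one hmpos]
        exact_mod_cast hm1
      linarith
    exact Aux.tl_antitone hν h2 (by linarith) (by linarith)
  have htl0comp : tl ν (1 - 1/x) ≤ tl ν 0 := by
    have : 0 < 1/x := by positivity
    exact Aux.tl_antitone hν le_rfl h1x0 (by linarith)
  have hp0 : (0:ℝ) ≤ (1/2:ℝ)^x := Real.rpow_nonneg (by norm_num) _
  -- moment comparison
  have hmom_split : mom ω (2*(m:ℝ)+1) ≤ 2 * mom ω (2*x) + (1/2:ℝ)^x * A := by
    have hPm : IntegrableOn (fun s => s ^ (2*(m:ℝ)+1) * ω s) (Ioo (0:ℝ) 1) volume := by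
      rw [← intervalIntegrable_iff_integrableOn_Ioo_of_le zero_le_one]
      exact Aux.intervalIntegrable_pow_weight hω (by positivity) le_rfl le_rfl zero_le_one
    have hPx : IntegrableOn (fun s => s ^ (2*x) * ω s) (Ioo (0:ℝ) 1) volume := by
      rw [← intervalIntegrable_iff_integrableOn_Ioo_of_le zero_le_one]
      exact Aux.intervalIntegrable_pow_weight hω (by positivity) le_rfl le_rfl zero_le_one
    have hmeq : mom ω (2*(m:ℝ)+1) = ∫ s in Ioo (0:ℝ) 1, s ^ (2*(m:ℝ)+1) * ω s := by
      rw [mom, intervalIntegral.integral_of_le zero_le_one, integral_Ioc_eq_integral_Ioo]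
    have hxeq : mom ω (2*x) = ∫ s in Ioo (0:ℝ) 1, s ^ (2*x) * ω s := by
      rw [mom, intervalIntegral.integral_of_le zero_le_one, integral_Ioc_eq_integral_Ioo]
    have hsplitm : (∫ s in Ioo (0:ℝ) 1, s ^ (2*(m:ℝ)+1) * ω s)
        = (∫ s in Ioc (0:ℝ) (1/2), s ^ (2*(m:ℝ)+1) * ω s)
          + ∫ s in Ioo (1/2:ℝ) 1, s ^ (2*(m:ℝ)+1) * ω s := by
      rw [← hunion, setIntegral_union hdisj measurableSet_Ioo
        (hPm.mono_set hsub1) (hPm.mono_set hsub2)]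
    have hq1 : (∫ s in Ioc (0:ℝ) (1/2), s ^ (2*(m:ℝ)+1) * ω s) ≤ (1/2:ℝ)^x * A := by
      have hgint : IntegrableOn (fun s => (1/2:ℝ)^x * |ω s|) (Ioc (0:ℝ) (1/2)) volume :=
        (hAint.mono_set hsub1).const_mul _
      have hmono2 : (∫ s in Ioc (0:ℝ) (1/2), s ^ (2*(m:ℝ)+1) * ω s)
          ≤ ∫ s in Ioc (0:ℝ) (1/2), (1/2:ℝ)^x * |ω s| := by
        apply setIntegral_mono_ae_restrict (hPm.mono_set hsub1) hgint
        filter_upwards [ae_restrict_mem measurableSet_Ioc] with s hs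
        have hs0 : (0:ℝ) < s := hs.1
        have hsh : s ≤ 1/2 := hs.2
        have h1 : s ^ (2*(m:ℝ)+1) ≤ (1/2:ℝ)^x := by
          calc s ^ (2*(m:ℝ)+1) ≤ (1/2:ℝ) ^ (2*(m:ℝ)+1) :=
                Real.rpow_le_rpow hs0.le hsh (by positivity)
            _ ≤ (1/2:ℝ)^x := Real.rpow_le_rpow_of_exponent_ge (by norm_num) (by norm_num)
                (by push_cast; linarith)
        calc s ^ (2*(m:ℝ)+1) * ω s ≤ s ^ (2*(m:ℝ)+1) * |ω s| :=
              mul_le_mul_of_nonneg_left (le_abs_self _) (Real.rpow_nonneg hs0.le _)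
          _ ≤ (1/2:ℝ)^x * |ω s| := mul_le_mul_of_nonneg_right h1 (abs_nonneg _)
      have habs2 : (∫ s in Ioc (0:ℝ) (1/2), |ω s|) ≤ A := by
        rw [hA]
        apply setIntegral_mono_set hAint
        · filter_upwards with s using abs_nonneg _
        · exact HasSubset.Subset.eventuallyLE hsub1
      calc (∫ s in Ioc (0:ℝ) (1/2), s ^ (2*(m:ℝ)+1) * ω s)
          ≤ ∫ s in Ioc (0:ℝ) (1/2), (1/2:ℝ)^x * |ω s| := hmono2
        _ = (1/2:ℝ)^x * ∫ s in Ioc (0:ℝ) (1/2), |ω s| := integral_const_mul _ _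
        _ ≤ (1/2:ℝ)^x * A := mul_le_mul_of_nonneg_left habs2 hp0
    have hq2 : (∫ s in Ioo (1/2:ℝ) 1, s ^ (2*(m:ℝ)+1) * ω s) ≤ 2 * mom ω (2*x) := by
      have haeω2 : 0 ≤ᵐ[volume.restrict (Ioo (1/2:ℝ) 1)] ω :=
        ae_restrict_of_ae_restrict_of_subset hsub2 haeω
      have hmono3 : (∫ s in Ioo (1/2:ℝ) 1, s ^ (2*(m:ℝ)+1) * ω s)
          ≤ ∫ s in Ioo (1/2:ℝ) 1, 2 * (s ^ (2*x) * ω s) := by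
        apply setIntegral_mono_ae_restrict (hPm.mono_set hsub2) ((hPx.mono_set hsub2).const_mul 2)
        filter_upwards [ae_restrict_mem measurableSet_Ioo, haeω2] with s hs hωs
        have hs0 : (0:ℝ) < s := lt_trans (by norm_num) hs.1
        have hsh : (1/2:ℝ) ≤ s := hs.1.le
        have hs1 : s ≤ 1 := hs.2.le
        have hkey3 : s ^ (2*(m:ℝ)+1) ≤ 2 * s ^ (2*x) := by
          have hsp : s ^ (2*x) = s ^ (2*(m:ℝ)+1) * s ^ (2*x - (2*(m:ℝ)+1)) := by
            rw [← Real.rpow_add hs0]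
            ring_nf
          have hge : s ^ (1:ℝ) ≤ s ^ (2*x - (2*(m:ℝ)+1)) :=
            Real.rpow_le_rpow_of_exponent_ge hs0 hs1 (by linarith)
          have hone : s ^ (1:ℝ) = s := Real.rpow_one s
          have h12 : (1/2:ℝ) ≤ s ^ (2*x - (2*(m:ℝ)+1)) := by
            rw [hone] at hge
            linarith
          have hnn : 0 ≤ s ^ (2*(m:ℝ)+1) := Real.rpow_nonneg hs0.le _
          have hmul := mul_le_mul_of_nonneg_left h12 hnn
          rw [hsp]
          linarith
        calc s ^ (2*(m:ℝ)+1) * ω s ≤ 2 * s ^ (2*x) * ω s :=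
              mul_le_mul_of_nonneg_right hkey3 hωs
          _ = 2 * (s ^ (2*x) * ω s) := by ring
      have hstep2 : (∫ s in Ioo (1/2:ℝ) 1, s ^ (2*x) * ω s) ≤ mom ω (2*x) := by
        rw [hxeq]
        apply setIntegral_mono_set hPx
        · filter_upwards [haeω, ae_restrict_mem measurableSet_Ioo] with s hs hmem
          exact mul_nonneg (Real.rpow_nonneg hmem.1.le _) hs
        · exact HasSubset.Subset.eventuallyLE hsub2
      calc (∫ s in Ioo (1/2:ℝ) 1, s ^ (2*(m:ℝ)+1) * ω s)
          ≤ ∫ s in Ioo (1/2:ℝ) 1, 2 * (s ^ (2*x) * ω s) := hmono3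
        _ = 2 * ∫ s in Ioo (1/2:ℝ) 1, s ^ (2*x) * ω s := integral_const_mul 2 _
        _ ≤ 2 * mom ω (2*x) := by linarith [hstep2]
    rw [hmeq, hsplitm]
    linarith
  -- small power comparison
  have h2x : (1/2:ℝ)^x * tl ω (3/4) ≤ mom ω (2*x) := by
    have hge := Aux.mom_ge hω (ρ := (3/4:ℝ)) (by norm_num) (by norm_num) (y := 2*x) (by positivity)
    have heq : ((3:ℝ)/4) ^ (2*x) = (((3:ℝ)/4)^(2:ℝ))^x :=
      Real.rpow_mul (by norm_num) 2 x
    have h916 : ((3:ℝ)/4)^(2:ℝ) = 9/16 := by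
      rw [show (2:ℝ) = ((2:ℕ):ℝ) by norm_num, Real.rpow_natCast]
      norm_num
    have hcomp : (1/2:ℝ)^x ≤ ((9:ℝ)/16)^x :=
      Real.rpow_le_rpow (by norm_num) (by norm_num) hx0.le
    have heq2 : ((3:ℝ)/4) ^ (2*x) = ((9:ℝ)/16)^x := by
      rw [heq, h916]
    rw [heq2] at hge
    have hmul := mul_le_mul_of_nonneg_right hcomp htlω34.le
    linarith
  -- final chain
  have hchain1 : mom μf x ≤ (1/2:ℝ)^x * L₂ + 2 * Km := by
    rw [hmom_eq, hsplit]
    linarith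
  have hchain2 : mom μf x * tl ν (1 - 1/x)
      ≤ (1/2:ℝ)^x * L₂ * tl ν 0 + 2 * (Km * tl ν (1 - 1/(m:ℝ))) := by
    have hmomμnn : 0 ≤ mom μf x := by
      rw [hmom_eq]
      apply setIntegral_nonneg_of_ae_restrict
      filter_upwards [haeμ, ae_restrict_mem measurableSet_Ioo] with s hs hmem
      exact mul_nonneg (Real.rpow_nonneg hmem.1.le _) hs
    have h1 : mom μf x * tl ν (1 - 1/x) ≤ ((1/2:ℝ)^x * L₂ + 2 * Km) * tl ν (1 - 1/x) :=
      mul_le_mul_of_nonneg_right hchain1 htlx.le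
    have h2 : (1/2:ℝ)^x * L₂ * tl ν (1 - 1/x) ≤ (1/2:ℝ)^x * L₂ * tl ν 0 :=
      mul_le_mul_of_nonneg_left htl0comp (mul_nonneg hp0 hL₂0)
    have h3 : Km * tl ν (1 - 1/x) ≤ Km * tl ν (1 - 1/(m:ℝ)) :=
      mul_le_mul_of_nonneg_left htlcomp hKm0
    nlinarith
  have hchain3 : mom μf x * tl ν (1 - 1/x)
      ≤ (1/2:ℝ)^x * L₂ * tl ν 0 + 6 * C₀ * (2 * mom ω (2*x) + (1/2:ℝ)^x * A) := by
    have h4 : Km * tl ν (1 - 1/(m:ℝ)) ≤ 3 * C₀ * mom ω (2*(m:ℝ)+1) := hkey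
    have h5 : 3 * C₀ * mom ω (2*(m:ℝ)+1) ≤ 3 * C₀ * (2 * mom ω (2*x) + (1/2:ℝ)^x * A) :=
      mul_le_mul_of_nonneg_left hmom_split (by linarith)
    linarith
  -- conclude
  have hpd : (1/2:ℝ)^x ≤ mom ω (2*x) / tl ω (3/4) := (le_div_iff₀ htlω34).2 h2x
  have hfin : (1/2:ℝ)^x * D ≤ mom ω (2*x) / tl ω (3/4) * D :=
    mul_le_mul_of_nonneg_right hpd hD0
  have hexpand : (1/2:ℝ)^x * L₂ * tl ν 0 + 6 * C₀ * (2 * mom ω (2*x) + (1/2:ℝ)^x * A)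
      = (1/2:ℝ)^x * D + 12 * C₀ * mom ω (2*x) := by
    rw [hD]
    ring
  have hCmul : C * mom ω (2*x) = mom ω (2*x) / tl ω (3/4) * D + 12 * C₀ * mom ω (2*x) := by
    rw [hCdef]
    ring
  rw [hCmul]
  calc mom μf x * tl ν (1 - 1/x)
      ≤ (1/2:ℝ)^x * D + 12 * C₀ * mom ω (2*x) := by rw [← hexpand]; exact hchain3
    _ ≤ mom ω (2*x) / tl ω (3/4) * D + 12 * C₀ * mom ω (2*x) := by linarith
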